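/- Let G be a bipartite graph with vertex parts L(G) and R(G) and let k be a positive integer. Consider the approval election whose set of voters is L(G) and whose set of candidates is R(G) together with max(|L(G)|−|R(G)|, 0) additional candidates approved by no voter, where a voter ℓ ∈ L(G) approves a candidate r ∈ R(G) if and only if ℓ and r are adjacent in G. Then, for committee size k' = |L(G)|, this election contains a k-cohesive group if and only if G contains a k-biclique, i.e., sets L' ⊆ L(G) and R' ⊆ R(G) with |L'| = |R'| = k such that every vertex of L' is adjacent to every vertex of R'. -/

import Mathlib

/-- `X` is an `ℓ`-cohesive group in the approval election with voter type `V`,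
candidate type `C`, approval function `A`, `n` voters and committee size `k`:
`|X| ≥ ℓ·n/k` and at least `ℓ` candidates are approved by every member of `X`. -/
def IsCohesive {V C : Type*} [Fintype C] [DecidableEq C]
    (A : V → Finset C) (n k ℓ : ℕ) (X : Finset V) : Prop :=
  (ℓ : ℝ) * n / k ≤ X.card ∧
    ℓ ≤ (Finset.univ.filter (fun c : C => ∀ v ∈ X, c ∈ A v)).card

theorem stmt0 {L R : Type*} [Fintype L] [Fintype R] [DecidableEq L] [DecidableEq R]
    [Nonempty L]
    (Adj : L → R → Prop) [∀ l r, Decidable (Adj l r)] (k : ℕ) (hk : 0 < k)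
    (A : L → Finset (R ⊕ Fin (Fintype.card L - Fintype.card R)))
    (hA : ∀ l : L, A l = (Finset.univ : Finset (R ⊕ Fin (Fintype.card L - Fintype.card R))).filter
      (fun c => ∃ r : R, c = Sum.inl r ∧ Adj l r)) :
    (∃ X : Finset L, IsCohesive A (Fintype.card L) (Fintype.card L) k X) ↔
      ∃ (L' : Finset L) (R' : Finset R), L'.card = k ∧ R'.card = k ∧
        ∀ l ∈ L', ∀ r ∈ R', Adj l r := by
  have hn : (0:ℝ) < (Fintype.card L : ℝ) := by
    exact_mod_cast Fintype.card_pos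
  have hratio : (k : ℝ) * (Fintype.card L) / (Fintype.card L) = k := by
    field_simp
  constructor
  · rintro ⟨X, h1, h2⟩
    rw [hratio] at h1
    have hXk : k ≤ X.card := by exact_mod_cast h1
    have hXne : X.Nonempty := Finset.card_pos.mp (lt_of_lt_of_le hk hXk)
    obtain ⟨v0, hv0⟩ := hXne
    -- candidates approved by all of X
    let S := Finset.univ.filter
      (fun c : R ⊕ Fin (Fintype.card L - Fintype.card R) => ∀ v ∈ X, c ∈ A v)
    let T := Finset.univ.filter (fun r : R => ∀ l ∈ X, Adj l r)
    have hsub : S ⊆ T.image Sum.inl := by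
      intro c hc
      rw [Finset.mem_filter] at hc
      have hc0 := hc.2 v0 hv0
      rw [hA v0, Finset.mem_filter] at hc0
      obtain ⟨r, rfl, -⟩ := hc0.2
      refine Finset.mem_image.mpr ⟨r, ?_, rfl⟩
      rw [Finset.mem_filter]
      refine ⟨Finset.mem_univ _, fun l hl => ?_⟩
      have := hc.2 l hl
      rw [hA l, Finset.mem_filter] at this
      obtain ⟨r', hr', hadj⟩ := this.2
      obtain rfl : r = r' := by simpa using hr'
      exact hadj
    have hTk : k ≤ T.card := by
      calc k ≤ S.card := by convert h2 using 2; ext c; simp [S, Finset.mem_filter]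
        _ ≤ (T.image Sum.inl).card := Finset.card_le_card hsub
        _ ≤ T.card := Finset.card_image_le
    obtain ⟨L', hL'sub, hL'card⟩ := Finset.exists_subset_card_eq hXk
    obtain ⟨R', hR'sub, hR'card⟩ := Finset.exists_subset_card_eq hTk
    refine ⟨L', R', hL'card, hR'card, fun l hl r hr => ?_⟩
    have := hR'sub hr
    rw [Finset.mem_filter] at this
    exact this.2 l (hL'sub hl)
  · rintro ⟨L', R', hL', hR', hadj⟩
    refine ⟨L', ?_, ?_⟩
    · rw [hratio, hL']
    · have : R'.image Sum.inl ⊆ Finset.univ.filter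
          (fun c : R ⊕ Fin (Fintype.card L - Fintype.card R) => ∀ v ∈ L', c ∈ A v) := by
        intro c hc
        obtain ⟨r, hr, rfl⟩ := Finset.mem_image.mp hc
        refine Finset.mem_filter.mpr ⟨Finset.mem_univ _, fun v hv => ?_⟩
        rw [hA v, Finset.mem_filter]
        exact ⟨Finset.mem_univ _, r, rfl, hadj v hv r hr⟩
      have h := Finset.card_le_card this
      rw [Finset.card_image_of_injective _ Sum.inl_injective, hR'] at h
      exact h.trans (le_of_eq (by congr 1; ext c; simp [Finset.mem_filter]))
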